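/- For every integer ℓ ≥ 2, ex(Q_n, C_{2ℓ}) = Ω(n^(1/2 + 1/(4ℓ−2)) * 2^n): there exists c > 0 such that for all sufficiently large n, Q_n has a C_{2ℓ}-free subgraph with at least c * n^(1/2 + 1/(4ℓ−2)) * 2^n edges. -/

import Mathlib

/-- The hypercube graph `Q_n`: vertices are subsets of `[n]`, with edges between `A ⊆ B`
with `|B| = |A| + 1`. -/
def Qgraph (n : ℕ) : SimpleGraph (Finset (Fin n)) where
  Adj A B := (A ⊆ B ∧ B.card = A.card + 1) ∨ (B ⊆ A ∧ A.card = B.card + 1)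
  symm := ⟨by intro A B h; tauto⟩
  loopless := ⟨by intro A h; rcases h with ⟨_, h⟩ | ⟨_, h⟩ <;> omega⟩


/-- `H` is contained in `G`: there is an injective (on the support of `H`) homomorphism,
i.e. `G` has a subgraph isomorphic to `H`. -/
def GContains {α β : Type*} (H : SimpleGraph α) (G : SimpleGraph β) : Prop :=
  ∃ f : α → β, Set.InjOn f {v | ∃ w, H.Adj v w} ∧ ∀ u v, H.Adj u v → G.Adj (f u) (f v)

namespace CHelp

open Finset

attribute [local instance] Classical.propDecidable

variable {n : ℕ}

lemma qadj_symmDiff {A B : Finset (Fin n)} (h : (Qgraph n).Adj A B) :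
    ∃ x, symmDiff A B = {x} := by
  rw [← Finset.card_eq_one, symmDiff_def]
  rcases h with ⟨hs, hc⟩ | ⟨hs, hc⟩
  · rw [Finset.sdiff_eq_empty_iff_subset.2 hs]
    simp only [Finset.empty_union, sup_eq_union]
    rw [Finset.card_sdiff_of_subset hs, hc]
    omega
  · rw [Finset.sdiff_eq_empty_iff_subset.2 hs]
    simp only [Finset.union_empty, sup_eq_union]
    rw [Finset.card_sdiff_of_subset hs, hc]
    omega

lemma symmDiff_single {A B : Finset (Fin n)} {x : Fin n} (h : symmDiff A B = {x}) :
    B = symmDiff A {x} := by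
  rw [← h, symmDiff_symmDiff_cancel_left]

/-- counting functions with prescribed values on a set -/
lemma card_fixed_values {α β : Type*} [Fintype α] [Fintype β] [DecidableEq α] [DecidableEq β]
    (s : Finset α) (c : β) :
    (univ.filter fun g : α → β => ∀ a ∈ s, g a = c).card
      ≤ Fintype.card β ^ (Fintype.card α - s.card) := by
  classical
  have h1 : Fintype.card β ^ (Fintype.card α - s.card)
      = Fintype.card ((sᶜ : Finset α) → β) := by
    rw [Fintype.card_fun, Fintype.card_coe, Finset.card_compl]
  rw [h1, ← Finset.card_univ]
  apply Finset.card_le_card_of_injOn (fun g => fun a : (sᶜ : Finset α) => g a.1)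
    (fun _ _ => Finset.mem_univ _)
  intro g1 h1' g2 h2' hgg
  simp only [coe_filter, Set.mem_setOf_eq, mem_univ, true_and] at h1' h2'
  funext a
  by_cases ha : a ∈ s
  · rw [h1' a ha, h2' a ha]
  · exact congrFun hgg ⟨a, by simpa using ha⟩


variable (n : ℕ) (m : ℕ) [NeZero m] (K : ℕ)

/-- injective cycle embeddings of length `m` into the hypercube -/
noncomputable def W : Finset (Fin m → Finset (Fin n)) :=
  univ.filter fun f => Function.Injective f ∧ ∀ i, (Qgraph n).Adj (f i) (f (i + 1))

noncomputable def classE (χ : Sym2 (Finset (Fin n)) → Fin K) (c : Fin K) :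
    Finset (Sym2 (Finset (Fin n))) :=
  (Qgraph n).edgeFinset.filter fun e => χ e = c

noncomputable def Bmono (χ : Sym2 (Finset (Fin n)) → Fin K) (c : Fin K) :
    Finset (Fin m → Finset (Fin n)) :=
  (W n m).filter fun f => ∀ i, χ s(f i, f (i + 1)) = c

lemma sum_classE :
    ∑ χ : Sym2 (Finset (Fin n)) → Fin K, ∑ c : Fin K, (classE n K χ c).card
      = K ^ (Fintype.card (Sym2 (Finset (Fin n)))) * (Qgraph n).edgeFinset.card := by
  have : ∀ χ : Sym2 (Finset (Fin n)) → Fin K,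
      ∑ c : Fin K, (classE n K χ c).card = (Qgraph n).edgeFinset.card := by
    intro χ
    simp only [classE, Finset.card_filter]
    rw [Finset.sum_comm]
    have h2 : ∀ e ∈ (Qgraph n).edgeFinset,
        (∑ c : Fin K, if χ e = c then (1:ℕ) else 0) = 1 := by
      intro e _
      simp
    rw [Finset.sum_congr rfl h2, Finset.sum_const, smul_eq_mul, mul_one]
  rw [Finset.sum_congr rfl (fun χ _ => this χ), Finset.sum_const, Finset.card_univ,
    Fintype.card_fun, Fintype.card_fin, smul_eq_mul]


lemma edges_inj (hm : 3 ≤ m) {f : Fin m → Finset (Fin n)} (hf : Function.Injective f) :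
    Function.Injective fun i : Fin m => s(f i, f (i + 1)) := by
  intro i j hij
  simp only [Sym2.eq_iff] at hij
  rcases hij with ⟨h1, _⟩ | ⟨h1, h2⟩
  · exact hf h1
  · exfalso
    have hi : i = j + 1 := hf h1
    have hj : j = i + 1 := (hf h2).symm
    rw [hj] at hi
    have h0 : (0 : Fin m) = 1 + 1 := by
      have hi' : i = i + (1 + 1) := by rw [← add_assoc]; exact hi
      have := left_eq_add.mp hi'
      exact this.symm
    have := congrArg Fin.val h0
    have hm1 : ((1 : Fin m) : ℕ) = 1 % m := Fin.val_one' m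
    rw [Fin.val_add, hm1, Fin.val_zero] at this
    have h3 : 1 % m = 1 := Nat.mod_eq_of_lt (by omega)
    rw [h3] at this
    have h4 : (1 + 1) % m = 2 := Nat.mod_eq_of_lt (by omega)
    omega

lemma sum_Bmono (hm : 3 ≤ m) :
    ∑ χ : Sym2 (Finset (Fin n)) → Fin K, ∑ c : Fin K, (Bmono n m K χ c).card
      ≤ (W n m).card * (K * K ^ (Fintype.card (Sym2 (Finset (Fin n))) - m)) := by
  rw [Finset.sum_comm]
  have key : ∀ c : Fin K, ∑ χ : Sym2 (Finset (Fin n)) → Fin K, (Bmono n m K χ c).card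
      ≤ (W n m).card * K ^ (Fintype.card (Sym2 (Finset (Fin n))) - m) := by
    intro c
    simp only [Bmono, Finset.card_filter]
    rw [Finset.sum_comm]
    calc ∑ f ∈ W n m, ∑ χ : Sym2 (Finset (Fin n)) → Fin K,
          (if (∀ i, χ s(f i, f (i + 1)) = c) then (1:ℕ) else 0)
        ≤ ∑ _f ∈ W n m, K ^ (Fintype.card (Sym2 (Finset (Fin n))) - m) := ?_
      _ = (W n m).card * K ^ (Fintype.card (Sym2 (Finset (Fin n))) - m) := by
          rw [Finset.sum_const, smul_eq_mul]
    refine Finset.sum_le_sum fun f hf => ?_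
    have hfW : Function.Injective f ∧ ∀ i, (Qgraph n).Adj (f i) (f (i + 1)) := by
      simpa [W] using hf
    -- the edge finset of the cycle f
    set sf : Finset (Sym2 (Finset (Fin n))) :=
      Finset.image (fun i : Fin m => s(f i, f (i + 1))) Finset.univ with hsf
    have hcard : sf.card = m := by
      rw [hsf, Finset.card_image_of_injective _ (edges_inj n m hm hfW.1), Finset.card_univ,
        Fintype.card_fin]
    have hsub : (∑ χ : Sym2 (Finset (Fin n)) → Fin K,
          if (∀ i, χ s(f i, f (i + 1)) = c) then (1:ℕ) else 0)
        = (Finset.univ.filter fun χ : Sym2 (Finset (Fin n)) → Fin K =>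
            ∀ i, χ s(f i, f (i + 1)) = c).card := by
      rw [Finset.card_filter]
    rw [hsub]
    calc (Finset.univ.filter fun χ : Sym2 (Finset (Fin n)) → Fin K =>
            ∀ i, χ s(f i, f (i + 1)) = c).card
        ≤ (Finset.univ.filter fun χ : Sym2 (Finset (Fin n)) → Fin K =>
            ∀ e ∈ sf, χ e = c).card := by
          apply Finset.card_le_card
          intro χ hχ
          simp only [Finset.mem_filter, Finset.mem_univ, true_and] at hχ ⊢
          intro e he
          rw [hsf] at he
          simp only [Finset.mem_image, Finset.mem_univ, true_and] at he
          obtain ⟨i, rfl⟩ := he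
          exact hχ i
      _ ≤ Fintype.card (Fin K) ^ (Fintype.card (Sym2 (Finset (Fin n))) - sf.card) :=
          card_fixed_values sf c
      _ = K ^ (Fintype.card (Sym2 (Finset (Fin n))) - m) := by
          rw [Fintype.card_fin, hcard]
  calc ∑ c : Fin K, ∑ χ : Sym2 (Finset (Fin n)) → Fin K, (Bmono n m K χ c).card
      ≤ ∑ _c : Fin K, (W n m).card * K ^ (Fintype.card (Sym2 (Finset (Fin n))) - m) :=
        Finset.sum_le_sum fun c _ => key c
    _ = (W n m).card * (K * K ^ (Fintype.card (Sym2 (Finset (Fin n))) - m)) := by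
        rw [Finset.sum_const, Finset.card_univ, Fintype.card_fin, smul_eq_mul]; ring


/-- the direction of the `i`-th step of `f` -/
noncomputable def dir (hn : 0 < n) (f : Fin m → Finset (Fin n)) (i : Fin m) : Fin n :=
  if h : ∃ x, symmDiff (f i) (f (i + 1)) = {x} then h.choose else ⟨0, hn⟩

lemma dir_spec (hn : 0 < n) {f : Fin m → Finset (Fin n)}
    (hf : ∀ i, (Qgraph n).Adj (f i) (f (i + 1))) (i : Fin m) :
    symmDiff (f i) (f (i + 1)) = {dir n m hn f i} := by
  have h : ∃ x, symmDiff (f i) (f (i + 1)) = {x} := qadj_symmDiff (hf i)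
  rw [dir, dif_pos h]
  exact h.choose_spec

lemma step_eq (hn : 0 < n) {f : Fin m → Finset (Fin n)}
    (hf : ∀ i, (Qgraph n).Adj (f i) (f (i + 1))) (i : Fin m) :
    f (i + 1) = symmDiff (f i) {dir n m hn f i} :=
  symmDiff_single (dir_spec n m hn hf i)

lemma fin_succ_eq (hm : 3 ≤ m) (k : ℕ) (hk : k + 1 < m) :
    (⟨k, by omega⟩ : Fin m) + 1 = ⟨k + 1, hk⟩ := by
  apply Fin.ext
  rw [Fin.val_add, Fin.val_one' m]
  simp only []
  have h1 : 1 % m = 1 := Nat.mod_eq_of_lt (by omega)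
  rw [h1]
  exact Nat.mod_eq_of_lt hk

/-- recovery: a cycle is determined by its start and its direction sequence -/
lemma recover (hn : 0 < n) (hm : 3 ≤ m) {f g : Fin m → Finset (Fin n)}
    (hf : ∀ i, (Qgraph n).Adj (f i) (f (i + 1)))
    (hg : ∀ i, (Qgraph n).Adj (g i) (g (i + 1)))
    (h0 : f 0 = g 0) (hd : dir n m hn f = dir n m hn g) : f = g := by
  have key : ∀ k : ℕ, ∀ hk : k < m, f ⟨k, hk⟩ = g ⟨k, hk⟩ := by
    intro k
    induction k with
    | zero =>
      intro hk
      have : (⟨0, hk⟩ : Fin m) = 0 := rfl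
      rw [this]; exact h0
    | succ k ih =>
      intro hk
      have hk' : k < m := by omega
      have hs := fin_succ_eq m hm k hk
      rw [← hs, step_eq n m hn hf, step_eq n m hn hg, ih hk', hd]
  funext i
  have : i = ⟨i.val, i.isLt⟩ := rfl
  rw [this]; exact key i.val i.isLt

/-- indicator function into `ZMod 2` -/
def ind (A : Finset (Fin n)) : Fin n → ZMod 2 := fun x => if x ∈ A then 1 else 0

lemma ind_symmDiff (A : Finset (Fin n)) (t : Fin n) :
    ind n (symmDiff A {t}) = ind n A + (fun x => if t = x then 1 else 0) := by
  funext x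
  simp only [ind, Pi.add_apply, Finset.mem_symmDiff, Finset.mem_singleton]
  by_cases hA : x ∈ A <;> by_cases ht : t = x <;> simp [hA, ht, eq_comm] <;> decide

/-- parity: every direction is used an even number of times -/
lemma dir_even (hn : 0 < n) {f : Fin m → Finset (Fin n)}
    (hf : ∀ i, (Qgraph n).Adj (f i) (f (i + 1))) (x : Fin n) :
    Even ((Finset.univ.filter fun i => dir n m hn f i = x).card) := by
  have hsum : ∑ i : Fin m, (fun y => if dir n m hn f i = y then (1 : ZMod 2) else 0)
      = 0 := by
    have h1 : ∑ i : Fin m, (ind n (f (i + 1)) - ind n (f i))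
        = (0 : Fin n → ZMod 2) := by
      rw [Finset.sum_sub_distrib]
      have : ∑ i : Fin m, ind n (f (i + 1)) = ∑ i : Fin m, ind n (f i) :=
        Fintype.sum_equiv (Equiv.addRight (1 : Fin m)) _ _ (fun i => rfl)
      rw [this, sub_self]
    have h2 : ∀ i : Fin m, ind n (f (i + 1)) - ind n (f i)
        = fun y => if dir n m hn f i = y then (1 : ZMod 2) else 0 := by
      intro i
      rw [step_eq n m hn hf i, ind_symmDiff]
      ring
    rw [← h1]
    exact (Finset.sum_congr rfl fun i _ => (h2 i).symm)
  have hx := congrFun hsum x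
  simp only [Finset.sum_apply, Pi.zero_apply] at hx
  have hcast : ((Finset.univ.filter fun i => dir n m hn f i = x).card : ZMod 2) = 0 := by
    rw [Finset.card_filter]
    push_cast
    convert hx using 2
  rw [ZMod.natCast_eq_zero_iff] at hcast
  exact even_iff_two_dvd.mpr hcast

/-- the number of distinct directions used is at most `ℓ` -/
lemma dir_image_card (hn : 0 < n) (ℓ : ℕ) (hm : m = 2 * ℓ) (hm3 : 3 ≤ m)
    {f : Fin m → Finset (Fin n)}
    (hf : ∀ i, (Qgraph n).Adj (f i) (f (i + 1))) :
    (Finset.univ.image (dir n m hn f)).card ≤ ℓ := by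
  set r := Finset.univ.image (dir n m hn f) with hr
  have hfib : (Finset.univ : Finset (Fin m)).card
      = ∑ x ∈ r, (Finset.univ.filter fun i => dir n m hn f i = x).card := by
    apply Finset.card_eq_sum_card_fiberwise
    intro i _
    exact Finset.mem_image_of_mem _ (Finset.mem_univ i)
  have hge : ∀ x ∈ r, 2 ≤ (Finset.univ.filter fun i => dir n m hn f i = x).card := by
    intro x hx
    have hev := dir_even n m hn hf x
    have hpos : 0 < (Finset.univ.filter fun i => dir n m hn f i = x).card := by
      rw [hr, Finset.mem_image] at hx
      obtain ⟨i, _, hi⟩ := hx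
      exact Finset.card_pos.2 ⟨i, by simp [hi]⟩
    obtain ⟨k, hk⟩ := hev
    omega
  have : 2 * r.card ≤ ∑ x ∈ r, (Finset.univ.filter fun i => dir n m hn f i = x).card := by
    calc 2 * r.card = ∑ _x ∈ r, 2 := by rw [Finset.sum_const, smul_eq_mul, mul_comm]
      _ ≤ _ := Finset.sum_le_sum hge
  rw [← hfib, Finset.card_univ, Fintype.card_fin, hm] at this
  omega

/-- main counting bound for `W` -/
lemma W_card_bound (hn : 0 < n) (ℓ : ℕ) (hm : m = 2 * ℓ) (hm3 : 3 ≤ m) :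
    (W n m).card ≤ 2 ^ n * ℓ ^ m * n ^ ℓ := by
  classical
  have htarget : (2 : ℕ) ^ n * ℓ ^ m * n ^ ℓ
      = Fintype.card (Finset (Fin n) × (Fin m → Fin ℓ) × (Fin ℓ → Fin n)) := by
    simp [Fintype.card_fun, Fintype.card_finset, mul_assoc]
  rw [htarget, ← Finset.card_univ]
  -- encode each cycle by (start, pattern, palette)
  set enc : (Fin m → Finset (Fin n)) → Finset (Fin n) × (Fin m → Fin ℓ) × (Fin ℓ → Fin n) :=
    fun f =>
      (f 0,
       fun i => ⟨(((Finset.univ.image (dir n m hn f)).sort (· ≤ ·)).idxOf (dir n m hn f i)) % ℓ,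
         Nat.mod_lt _ (by omega)⟩,
       fun j => (((Finset.univ.image (dir n m hn f)).sort (· ≤ ·)).getD j.val ⟨0, hn⟩) ) with henc
  have hdec : ∀ f ∈ W n m, ∀ i, (enc f).2.2 ((enc f).2.1 i) = dir n m hn f i := by
    intro f hfW i
    have hfW' : Function.Injective f ∧ ∀ i, (Qgraph n).Adj (f i) (f (i + 1)) := by
      simpa [W] using hfW
    set L := (Finset.univ.image (dir n m hn f)).sort (· ≤ ·) with hL
    have hmem : dir n m hn f i ∈ L := by
      rw [hL, Finset.mem_sort]
      exact Finset.mem_image_of_mem _ (Finset.mem_univ i)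
    have hlen : L.length ≤ ℓ := by
      rw [hL, Finset.length_sort]
      exact dir_image_card n m hn ℓ hm hm3 hfW'.2
    have hidx : L.idxOf (dir n m hn f i) < L.length := List.idxOf_lt_length_iff.2 hmem
    have hmod : L.idxOf (dir n m hn f i) % ℓ = L.idxOf (dir n m hn f i) :=
      Nat.mod_eq_of_lt (by omega)
    simp only [henc, ← hL, hmod]
    rw [List.getD_eq_getElem L _ (by omega : L.idxOf (dir n m hn f i) < L.length)]
    exact List.getElem_idxOf hidx
  apply Finset.card_le_card_of_injOn enc (fun _ _ => Finset.mem_univ _)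
  intro f hf g hg hfg
  simp only [Finset.mem_coe] at hf hg
  have hfW : Function.Injective f ∧ ∀ i, (Qgraph n).Adj (f i) (f (i + 1)) := by
    simpa [W] using hf
  have hgW : Function.Injective g ∧ ∀ i, (Qgraph n).Adj (g i) (g (i + 1)) := by
    simpa [W] using hg
  have h0 : f 0 = g 0 := congrArg Prod.fst hfg
  have hd : dir n m hn f = dir n m hn g := by
    funext i
    rw [← hdec f hf i, ← hdec g hg i, hfg]
  exact recover n m hn hm3 hfW.2 hgW.2 h0 hd


/-- lower bound on the number of edges of the hypercube -/
lemma edge_lower : n * 2 ^ (n - 1) ≤ (Qgraph n).edgeFinset.card := by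
  classical
  set P : Finset (Fin n × Finset (Fin n)) :=
    Finset.univ.filter (fun p => p.1 ∉ p.2) with hP
  have hPcard : P.card = n * 2 ^ (n - 1) := by
    rw [hP, Finset.card_filter]
    rw [Fintype.sum_prod_type]
    have hinner : ∀ i : Fin n,
        (∑ A : Finset (Fin n), if i ∉ A then (1:ℕ) else 0) = 2 ^ (n - 1) := by
      intro i
      rw [← Finset.card_filter]
      have : (Finset.univ.filter fun A : Finset (Fin n) => i ∉ A)
          = ((Finset.univ : Finset (Fin n)).erase i).powerset := by
        ext A
        simp [Finset.mem_powerset, Finset.subset_erase]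
      rw [this, Finset.card_powerset, Finset.card_erase_of_mem (Finset.mem_univ i),
        Finset.card_univ, Fintype.card_fin]
    rw [Finset.sum_congr rfl fun i _ => hinner i, Finset.sum_const, Finset.card_univ,
      Fintype.card_fin, smul_eq_mul]
  rw [← hPcard]
  apply Finset.card_le_card_of_injOn (fun p => s(p.2, insert p.1 p.2))
  · intro p hp
    rw [hP, Finset.mem_coe, Finset.mem_filter] at hp
    rw [Finset.mem_coe, SimpleGraph.mem_edgeFinset, SimpleGraph.mem_edgeSet]
    exact Or.inl ⟨Finset.subset_insert _ _, Finset.card_insert_of_notMem hp.2⟩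
  · intro p hp q hq hpq
    simp only [Finset.coe_filter, Set.mem_setOf_eq, Finset.mem_univ, true_and, hP] at hp hq
    simp only [Sym2.eq_iff] at hpq
    rcases hpq with ⟨h1, h2⟩ | ⟨h1, h2⟩
    · have hij : p.1 = q.1 := by
        have : p.1 ∈ insert q.1 q.2 := by rw [← h2, h1]; exact Finset.mem_insert_self _ _
        rcases Finset.mem_insert.1 this with h | h
        · exact h
        · exact absurd (h1 ▸ h) hp
      exact Prod.ext hij h1
    · exfalso
      have c1 : p.2.card = q.2.card + 1 := by
        rw [h1, Finset.card_insert_of_notMem hq]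
      have c2 : q.2.card = p.2.card + 1 := by
        rw [← h2, Finset.card_insert_of_notMem hp]
      omega

/-- pigeonhole: some color class has many edges and few monochromatic cycles -/
lemma main_exists (hm3 : 3 ≤ m) (hK : 0 < K) (M : ℕ)
    (hmT : m ≤ Fintype.card (Sym2 (Finset (Fin n))))
    (hnum : K * (W n m).card + K ^ (m + 1) * M ≤ K ^ m * (Qgraph n).edgeFinset.card) :
    ∃ (χ : Sym2 (Finset (Fin n)) → Fin K) (c : Fin K),
      (Bmono n m K χ c).card + M ≤ (classE n K χ c).card := by
  by_contra hcon
  push_neg at hcon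
  set T := Fintype.card (Sym2 (Finset (Fin n))) with hT
  set E := (Qgraph n).edgeFinset.card with hE
  set Wc := (W n m).card with hWc
  -- summing the strict inequalities
  have hpt : ∀ (χ : Sym2 (Finset (Fin n)) → Fin K) (c : Fin K),
      (classE n K χ c).card + 1 ≤ (Bmono n m K χ c).card + M := by
    intro χ c
    have := hcon χ c
    omega
  have hsum : (∑ χ : Sym2 (Finset (Fin n)) → Fin K, ∑ c : Fin K, (classE n K χ c).card)
        + K ^ T * K
      ≤ (∑ χ : Sym2 (Finset (Fin n)) → Fin K, ∑ c : Fin K, (Bmono n m K χ c).card)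
        + K ^ T * K * M := by
    have h1 : ∀ χ : Sym2 (Finset (Fin n)) → Fin K,
        (∑ c : Fin K, (classE n K χ c).card) + K
          ≤ (∑ c : Fin K, (Bmono n m K χ c).card) + K * M := by
      intro χ
      calc (∑ c : Fin K, (classE n K χ c).card) + K
          = ∑ c : Fin K, ((classE n K χ c).card + 1) := by
            rw [Finset.sum_add_distrib, Finset.sum_const, Finset.card_univ, Fintype.card_fin,
              smul_eq_mul, mul_one]
        _ ≤ ∑ c : Fin K, ((Bmono n m K χ c).card + M) :=
            Finset.sum_le_sum fun c _ => hpt χ c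
        _ = (∑ c : Fin K, (Bmono n m K χ c).card) + K * M := by
            rw [Finset.sum_add_distrib, Finset.sum_const, Finset.card_univ, Fintype.card_fin,
              smul_eq_mul]
    have hcardχ : (Finset.univ : Finset (Sym2 (Finset (Fin n)) → Fin K)).card = K ^ T := by
      rw [Finset.card_univ, Fintype.card_fun, Fintype.card_fin]
    calc (∑ χ : Sym2 (Finset (Fin n)) → Fin K, ∑ c : Fin K, (classE n K χ c).card) + K ^ T * K
        = ∑ χ : Sym2 (Finset (Fin n)) → Fin K, ((∑ c : Fin K, (classE n K χ c).card) + K) := by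
          rw [Finset.sum_add_distrib, Finset.sum_const, hcardχ, smul_eq_mul]
      _ ≤ ∑ χ : Sym2 (Finset (Fin n)) → Fin K,
            ((∑ c : Fin K, (Bmono n m K χ c).card) + K * M) :=
          Finset.sum_le_sum fun χ _ => h1 χ
      _ = (∑ χ : Sym2 (Finset (Fin n)) → Fin K, ∑ c : Fin K, (Bmono n m K χ c).card)
            + K ^ T * K * M := by
          rw [Finset.sum_add_distrib, Finset.sum_const, hcardχ, smul_eq_mul, mul_assoc]
  rw [sum_classE n K] at hsum
  have hB := sum_Bmono n m K hm3
  rw [← hE] at hsum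
  rw [← hWc] at hB
  -- rewrite K ^ T = K ^ (T - m) * K ^ m
  have hTm : T = (T - m) + m := (Nat.sub_add_cancel hmT).symm
  set a := K ^ (T - m) with ha
  have hKT : K ^ T = a * K ^ m := by rw [hTm, pow_add]
  -- multiply hnum by a
  have hnum' : a * (K * Wc + K ^ (m + 1) * M) ≤ a * (K ^ m * E) :=
    Nat.mul_le_mul_left a hnum
  have hfin : K ^ T * E + K ^ T * K ≤ Wc * (K * a) + K ^ T * K * M := le_trans hsum
    (Nat.add_le_add_right hB _)
  rw [hKT] at hfin
  have hKm1 : K ^ (m + 1) = K ^ m * K := pow_succ K m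
  have h1 : Wc * (K * a) + a * K ^ m * K * M ≤ a * K ^ m * E := by
    calc Wc * (K * a) + a * K ^ m * K * M = a * (K * Wc + K ^ (m + 1) * M) := by
          rw [hKm1]; ring
      _ ≤ a * (K ^ m * E) := hnum'
      _ = a * K ^ m * E := by ring
  have h2 : a * K ^ m * E + a * K ^ m * K ≤ a * K ^ m * E + 0 := by
    rw [add_zero]
    exact le_trans hfin h1
  have h3 : a * K ^ m * K ≤ 0 := Nat.le_of_add_le_add_left h2
  have h4 : 0 < a * K ^ m * K := by positivity
  omega


/-- the final construction: a subgraph of the hypercube with no `m`-cycle and many edges -/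
lemma exists_graph (hm3 : 3 ≤ m) (hK : 0 < K) (M : ℕ)
    (hmT : m ≤ Fintype.card (Sym2 (Finset (Fin n))))
    (hnum : K * (W n m).card + K ^ (m + 1) * M ≤ K ^ m * (Qgraph n).edgeFinset.card) :
    ∃ G : SimpleGraph (Finset (Fin n)), G ≤ Qgraph n ∧
      (∀ f : Fin m → Finset (Fin n), Function.Injective f →
        (∀ i, G.Adj (f i) (f (i + 1))) → False) ∧ (M : ℕ) ≤ G.edgeSet.ncard := by
  classical
  obtain ⟨χ, c, hgood⟩ := main_exists n m K hm3 hK M hmT hnum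
  set D : Finset (Sym2 (Finset (Fin n))) :=
    (Bmono n m K χ c).image (fun f => s(f 0, f 1)) with hD
  set S : Finset (Sym2 (Finset (Fin n))) := classE n K χ c \ D with hS
  have hSedge : ∀ e ∈ S, e ∈ (Qgraph n).edgeSet := by
    intro e he
    rw [hS, Finset.mem_sdiff, classE, Finset.mem_filter, SimpleGraph.mem_edgeFinset] at he
    exact he.1.1
  set G : SimpleGraph (Finset (Fin n)) :=
    { Adj := fun A B => s(A, B) ∈ S
      symm := ⟨by
        intro A B h
        rwa [Sym2.eq_swap]⟩
      loopless := ⟨by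
        intro A h
        have := hSedge _ h
        rw [SimpleGraph.mem_edgeSet] at this
        exact (Qgraph n).loopless.irrefl A this⟩ } with hG
  have hle : G ≤ Qgraph n := by
    intro A B h
    have := hSedge _ h
    rwa [SimpleGraph.mem_edgeSet] at this
  refine ⟨G, hle, ?_, ?_⟩
  · intro f hinj hadj
    have hfW : f ∈ W n m := by
      rw [W, Finset.mem_filter]
      exact ⟨Finset.mem_univ f, hinj, fun i => hle (hadj i)⟩
    have hfB : f ∈ Bmono n m K χ c := by
      rw [Bmono, Finset.mem_filter]
      refine ⟨hfW, fun i => ?_⟩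
      have := hadj i
      rw [hG] at this
      simp only at this
      rw [hS, Finset.mem_sdiff, classE, Finset.mem_filter] at this
      exact this.1.2
    have hdel : s(f 0, f 1) ∈ D := Finset.mem_image_of_mem _ hfB
    have := hadj 0
    rw [hG] at this
    simp only at this
    rw [zero_add] at this
    rw [hS, Finset.mem_sdiff] at this
    exact this.2 hdel
  · have hedge : G.edgeSet = (S : Set (Sym2 (Finset (Fin n)))) := by
      ext e
      induction e with
      | _ A B => simp [SimpleGraph.mem_edgeSet, hG]
    rw [hedge, Set.ncard_coe_finset]
    have h1 : (classE n K χ c).card ≤ S.card + D.card :=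
      Finset.card_le_card_sdiff_add_card
    have h2 : D.card ≤ (Bmono n m K χ c).card := Finset.card_image_le
    omega


lemma sym2_card_ge (α : Type*) [Fintype α] [DecidableEq α] :
    Fintype.card α ≤ Fintype.card (Sym2 α) := by
  apply Fintype.card_le_of_injective (fun a => s(a, a))
  intro a b hab
  rw [Sym2.eq_iff] at hab
  tauto

end CHelp

set_option maxHeartbeats 1000000 in
/-- Lower bound via the Lovász Local Lemma: for every `ℓ ≥ 2`,
`ex(Q_n, C_{2ℓ}) = Ω(n^(1/2 + 1/(4ℓ-2)) * 2^n)`. -/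
theorem extremal_number_cycle_hypercube_lower (ℓ : ℕ) (hℓ : 2 ≤ ℓ) :
    ∃ c > (0 : ℝ), ∃ n₀ : ℕ, ∀ n ≥ n₀, ∃ G : SimpleGraph (Finset (Fin n)),
      G ≤ Qgraph n ∧ ¬ GContains (SimpleGraph.cycleGraph (2 * ℓ)) G ∧
      c * (n : ℝ) ^ ((1 : ℝ) / 2 + 1 / (4 * (ℓ : ℝ) - 2)) * 2 ^ n ≤
        (G.edgeSet.ncard : ℝ) := by
  classical
  set m := 2 * ℓ with hmdef
  haveI : NeZero m := ⟨by omega⟩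
  have hm3 : 3 ≤ m := by omega
  set Cl := ℓ ^ m with hCl
  have hCl1 : 1 ≤ Cl := Nat.one_le_pow _ _ (by omega)
  set a : ℝ := ((ℓ : ℝ) - 1) / (2 * (ℓ : ℝ) - 1) with ha
  set α : ℝ := (1 : ℝ) / 2 + 1 / (4 * (ℓ : ℝ) - 2) with hα
  have hℓR : (2 : ℝ) ≤ (ℓ : ℝ) := by exact_mod_cast hℓ
  have hden1 : (2 * (ℓ : ℝ) - 1) ≠ 0 := by nlinarith
  have hden2 : (4 * (ℓ : ℝ) - 2) ≠ 0 := by nlinarith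
  have haα : a + α = 1 := by
    rw [ha, hα, show (1 : ℝ) / (4 * ℓ - 2) = (2 * (ℓ : ℝ) - 1)⁻¹ / 2 by
      rw [show (4 * (ℓ : ℝ) - 2) = 2 * (2 * ℓ - 1) by ring, one_div, mul_inv]; ring]
    linear_combination (1 / 2 : ℝ) * mul_inv_cancel₀ hden1
  have ha0 : 0 ≤ a := by
    apply div_nonneg <;> nlinarith
  have ha1 : a ≤ 1 := by
    rw [ha, div_le_one (by nlinarith)]
    nlinarith
  have hα0 : 0 ≤ α := by nlinarith
  refine ⟨1 / (128 * Cl), by positivity, 128 * Cl + m + 2, fun n hn => ?_⟩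
  have hn2 : 2 ≤ n := by omega
  have hn0 : 0 < n := by omega
  have hnpow : 128 * Cl ≤ 2 ^ n := le_trans (by omega) (Nat.lt_two_pow_self (n := n)).le
  -- choice of parameters
  set c1 := ⌈(n : ℝ) ^ a⌉₊ with hc1
  have hnra : (1 : ℝ) ≤ (n : ℝ) ^ a :=
    Real.one_le_rpow (by exact_mod_cast hn0) ha0
  have hc1pos : 1 ≤ c1 := by
    rw [hc1]
    exact Nat.one_le_ceil_iff.2 (by positivity)
  set K := 4 * Cl * c1 with hK
  have hK0 : 0 < K := by positivity
  set L := n * 2 ^ (n - 1) with hL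
  set M := L / (2 * K) with hM
  -- m ≤ card Sym2
  have hmT : m ≤ Fintype.card (Sym2 (Finset (Fin n))) := by
    calc m ≤ n := by omega
      _ ≤ 2 ^ n := (Nat.lt_two_pow_self (n := n)).le
      _ = Fintype.card (Finset (Fin n)) := by
          rw [Fintype.card_finset, Fintype.card_fin]
      _ ≤ _ := CHelp.sym2_card_ge _
  -- the key power inequality, proved over ℝ
  have hKpow : 4 * Cl * n ^ (ℓ - 1) ≤ K ^ (m - 1) := by
    have hc1pow : n ^ (ℓ - 1) ≤ c1 ^ (m - 1) := by
      have hreal : ((n : ℕ) : ℝ) ^ (ℓ - 1 : ℕ) ≤ ((c1 : ℕ) : ℝ) ^ (m - 1 : ℕ) := by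
        have h1 : (n : ℝ) ^ a ≤ (c1 : ℝ) := Nat.le_ceil _
        have h2 : ((n : ℝ) ^ a) ^ (m - 1 : ℕ) ≤ (c1 : ℝ) ^ (m - 1 : ℕ) :=
          pow_le_pow_left₀ (by positivity) h1 _
        refine le_trans ?_ h2
        rw [← Real.rpow_natCast ((n : ℝ) ^ a) (m - 1), ← Real.rpow_natCast (n : ℝ) (ℓ - 1),
          ← Real.rpow_mul (by positivity)]
        apply le_of_eq
        congr 1
        rw [ha]
        have hc1' : ((m - 1 : ℕ) : ℝ) = 2 * (ℓ : ℝ) - 1 := by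
          rw [hmdef]
          push_cast [Nat.cast_sub (by omega : 1 ≤ 2 * ℓ)]
          ring
        have hc2' : ((ℓ - 1 : ℕ) : ℝ) = (ℓ : ℝ) - 1 := by
          push_cast [Nat.cast_sub (by omega : 1 ≤ ℓ)]
          ring
        rw [hc2', hc1']
        field_simp
        rw [mul_div_cancel_right₀ _ (ne_of_gt (by linarith) : (ℓ : ℝ) * 2 - 1 ≠ 0)]
      exact_mod_cast hreal
    calc 4 * Cl * n ^ (ℓ - 1) ≤ (4 * Cl) ^ (m - 1) * c1 ^ (m - 1) := by
          apply Nat.mul_le_mul _ hc1pow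
          exact Nat.le_self_pow (by omega) _
      _ = K ^ (m - 1) := by rw [hK]; ring
  -- numeric condition for exists_graph
  have h2n : (2 : ℕ) ^ n = 2 * 2 ^ (n - 1) := by
    conv_lhs => rw [show n = (n - 1) + 1 by omega]
    rw [pow_succ]
    ring
  have hnl : n ^ ℓ = n ^ (ℓ - 1) * n := by
    conv_lhs => rw [show ℓ = (ℓ - 1) + 1 by omega]
    rw [pow_succ]
  have hclaim1 : 2 * (K * (CHelp.W n m).card) ≤ K ^ m * L := by
    have hW := CHelp.W_card_bound n m hn0 ℓ hmdef hm3
    calc 2 * (K * (CHelp.W n m).card) ≤ 2 * (K * (2 ^ n * ℓ ^ m * n ^ ℓ)) := by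
          apply Nat.mul_le_mul_left
          exact Nat.mul_le_mul_left _ hW
      _ = (4 * Cl * n ^ (ℓ - 1)) * K * L := by
          rw [hL, h2n, hnl, hCl]
          ring
      _ ≤ K ^ (m - 1) * K * L := by
          apply Nat.mul_le_mul_right
          exact Nat.mul_le_mul_right _ hKpow
      _ = K ^ m * L := by
          rw [← pow_succ, show (m - 1) + 1 = m by omega]
  have hclaim2 : 2 * (K ^ (m + 1) * M) ≤ K ^ m * L := by
    have hdiv : (2 * K) * M ≤ L := by
      rw [hM, mul_comm]
      exact Nat.div_mul_le_self L (2 * K)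
    calc 2 * (K ^ (m + 1) * M) = K ^ m * ((2 * K) * M) := by rw [pow_succ]; ring
      _ ≤ K ^ m * L := Nat.mul_le_mul_left _ hdiv
  have hnum : K * (CHelp.W n m).card + K ^ (m + 1) * M
      ≤ K ^ m * (Qgraph n).edgeFinset.card := by
    have hE := CHelp.edge_lower n
    rw [← hL] at hE
    have : K * (CHelp.W n m).card + K ^ (m + 1) * M ≤ K ^ m * L := by
      linarith [hclaim1, hclaim2]
    exact le_trans this (Nat.mul_le_mul_left _ hE)
  obtain ⟨G, hle, hnocyc, hMcard⟩ := CHelp.exists_graph n m K hm3 hK0 M hmT hnum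
  clear_value c1 K L M
  refine ⟨G, hle, ?_, ?_⟩
  · -- no 2ℓ-cycle
    rintro ⟨f, hinj, hhom⟩
    have hadj1 : ∀ v : Fin m, (SimpleGraph.cycleGraph m).Adj v (v + 1) := by
      intro v
      rw [SimpleGraph.cycleGraph_adj']
      right
      have : v + 1 - v = 1 := add_sub_cancel_left v 1
      rw [this, Fin.val_one']
      exact Nat.mod_eq_of_lt (by omega)
    have hsupp : {v : Fin m | ∃ w, (SimpleGraph.cycleGraph m).Adj v w} = Set.univ := by
      apply Set.eq_univ_of_forall
      intro v
      exact ⟨v + 1, hadj1 v⟩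
    rw [hsupp] at hinj
    exact hnocyc f (Set.injOn_univ.mp hinj) (fun i => hhom i (i + 1) (hadj1 i))
  · -- counting
    refine le_trans ?_ (by exact_mod_cast Nat.cast_le.2 hMcard)
    -- real estimates
    have hAB : (n : ℝ) ^ a * (n : ℝ) ^ α = (n : ℝ) := by
      rw [← Real.rpow_add (by exact_mod_cast hn0), haα, Real.rpow_one]
    have hB1 : (1 : ℝ) ≤ (n : ℝ) ^ α :=
      Real.one_le_rpow (by exact_mod_cast hn0) hα0
    have hAn : (n : ℝ) ^ a ≤ (n : ℝ) := by
      calc (n : ℝ) ^ a ≤ (n : ℝ) ^ (1 : ℝ) :=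
            Real.rpow_le_rpow_of_exponent_le (by exact_mod_cast hn0) ha1
        _ = (n : ℝ) := Real.rpow_one _
    have hKr : (K : ℝ) ≤ 8 * Cl * (n : ℝ) ^ a := by
      have hceil : (c1 : ℝ) < (n : ℝ) ^ a + 1 := by
        rw [hc1]
        exact_mod_cast Nat.ceil_lt_add_one (by positivity : (0:ℝ) ≤ (n:ℝ) ^ a)
      have : (K : ℝ) = 4 * Cl * c1 := by rw [hK]; push_cast; ring
      rw [this]
      have h8 : (n : ℝ) ^ a + 1 ≤ 2 * (n : ℝ) ^ a := by linarith
      calc (4 : ℝ) * Cl * c1 ≤ 4 * Cl * ((n : ℝ) ^ a + 1) := by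
            apply mul_le_mul_of_nonneg_left hceil.le (by positivity)
        _ ≤ 4 * Cl * (2 * (n : ℝ) ^ a) := by
            apply mul_le_mul_of_nonneg_left h8 (by positivity)
        _ = 8 * Cl * (n : ℝ) ^ a := by ring
    have hMr : (L : ℝ) < 2 * K * M + 2 * K := by
      have hmod := Nat.div_add_mod L (2 * K)
      have hlt : L % (2 * K) < 2 * K := Nat.mod_lt _ (by omega)
      have heq : L = 2 * K * (L / (2 * K)) + L % (2 * K) := by omega
      rw [← hM] at heq
      have hcast : ((L : ℕ) : ℝ) = 2 * (K : ℝ) * M + ((L % (2 * K) : ℕ) : ℝ) := by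
        calc ((L : ℕ) : ℝ) = ((2 * K * M + L % (2 * K) : ℕ) : ℝ) := congrArg (fun t : ℕ => (t : ℝ)) heq
          _ = 2 * (K : ℝ) * M + ((L % (2 * K) : ℕ) : ℝ) := by push_cast [Nat.cast_mul]; ring
      have hcast2 : ((L % (2 * K) : ℕ) : ℝ) < 2 * (K : ℝ) := by
        have : ((L % (2 * K) : ℕ) : ℝ) < ((2 * K : ℕ) : ℝ) := by exact_mod_cast hlt
        push_cast at this
        linarith
      linarith
    have hLr : (L : ℝ) = (n : ℝ) * 2 ^ (n - 1 : ℕ) := by rw [hL]; push_cast; ring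
    have h2pow : (2 : ℝ) ^ n = 2 * 2 ^ (n - 1 : ℕ) := by exact_mod_cast h2n
    have hpow128 : 128 * (Cl : ℝ) ≤ 2 ^ n := by exact_mod_cast hnpow
    have hKrpos : (0 : ℝ) < K := by exact_mod_cast hK0
    -- target : (1/(128 Cl)) n^α 2^n ≤ M
    have htarget : (1 / (128 * (Cl : ℝ))) * (n : ℝ) ^ α * 2 ^ n + 1 ≤ (L : ℝ) / (2 * K) := by
      rw [le_div_iff₀ (by linarith)]
      have hKb : 2 * (K : ℝ) ≤ 16 * Cl * (n : ℝ) ^ a := by linarith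
      calc ((1 / (128 * (Cl : ℝ))) * (n : ℝ) ^ α * 2 ^ n + 1) * (2 * K)
          ≤ ((1 / (128 * (Cl : ℝ))) * (n : ℝ) ^ α * 2 ^ n + 1) * (16 * Cl * (n : ℝ) ^ a) := by
            apply mul_le_mul_of_nonneg_left hKb
            positivity
        _ = (n : ℝ) ^ α * (n : ℝ) ^ a * 2 ^ n / 8 + 16 * Cl * (n : ℝ) ^ a := by
            field_simp
            ring
        _ = (n : ℝ) * 2 ^ n / 8 + 16 * Cl * (n : ℝ) ^ a := by
            rw [mul_comm ((n : ℝ) ^ α) ((n : ℝ) ^ a), hAB]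
        _ ≤ (n : ℝ) * 2 ^ n / 8 + 16 * Cl * (n : ℝ) := by
            have : 16 * (Cl : ℝ) * (n : ℝ) ^ a ≤ 16 * Cl * n := by
              apply mul_le_mul_of_nonneg_left hAn (by positivity)
            linarith
        _ ≤ (n : ℝ) * 2 ^ n / 8 + (n : ℝ) * 2 ^ n / 8 := by
            have : 16 * (Cl : ℝ) * (n : ℝ) ≤ (n : ℝ) * 2 ^ n / 8 := by
              have hn1 : (0 : ℝ) ≤ (n : ℝ) := by positivity
              have hmm := mul_le_mul_of_nonneg_left hpow128 hn1
              linarith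
            linarith
        _ ≤ (n : ℝ) * 2 ^ (n - 1 : ℕ) := by
            rw [h2pow]
            have hn1 : (0 : ℝ) ≤ (n : ℝ) * 2 ^ (n - 1 : ℕ) := by positivity
            linarith
        _ = (L : ℝ) := hLr.symm
    have hMbig : (1 / (128 * (Cl : ℝ))) * (n : ℝ) ^ α * 2 ^ n ≤ (M : ℝ) := by
      have h1 : (L : ℝ) / (2 * K) ≤ (M : ℝ) + 1 := by
        rw [div_le_iff₀ (by linarith)]
        nlinarith [hMr]
      linarith
    exact_mod_cast hMbig
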